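/- arXiv:1703.05788 — 2 statements merged into one kernel-verified Lean document; each statement's English description precedes it below -/
import Mathlib

section
/- Let v be a d-dimensional centered Gaussian random vector whose covariance matrix Σ satisfies ‖Σ − j·I‖ ≤ ε in operator norm, where j > 0 and Σ is positive definite. Then the vector N := j^{1/2}·Σ^{-1/2}·v is a centered Gaussian vector with covariance matrix j·I, and the covariance matrix of v − N has operator norm at most ε. In particular, each component of v − N has variance at most ε. -/
open MeasureTheory ProbabilityTheory Matrix

/-- The square root of a positive semidefinite matrix, as `Matrix.PosSemidef.sqrt` was defined
in the older Mathlib (removed since). -/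
noncomputable def Matrix.PosSemidef.sqrt {n : Type*} {𝕜 : Type*} [Fintype n] [RCLike 𝕜]
    [DecidableEq n] [PartialOrder 𝕜] [StarOrderedRing 𝕜] {A : Matrix n n 𝕜}
    (hA : A.PosSemidef) : Matrix n n 𝕜 :=
  (hA.1.eigenvectorUnitary : Matrix n n 𝕜) * diagonal ((↑) ∘ (√·) ∘ hA.1.eigenvalues) *
  (star (hA.1.eigenvectorUnitary : Matrix n n 𝕜))


lemma aux_sqrt_sub_sq_le {a j : ℝ} (ha : 0 ≤ a) (hj : 0 < j) :
    (Real.sqrt a - Real.sqrt j) ^ 2 ≤ |a - j| := by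
  have h1 : Real.sqrt a ^ 2 = a := Real.sq_sqrt ha
  have h2 : Real.sqrt j ^ 2 = j := Real.sq_sqrt hj.le
  have h3 : 0 ≤ Real.sqrt a := Real.sqrt_nonneg a
  have h4 : 0 ≤ Real.sqrt j := Real.sqrt_nonneg j
  rcases le_total a j with h | h
  · have h5 : Real.sqrt a ≤ Real.sqrt j := Real.sqrt_le_sqrt h
    rw [abs_of_nonpos (by linarith)]
    nlinarith
  · have h5 : Real.sqrt j ≤ Real.sqrt a := Real.sqrt_le_sqrt h
    rw [abs_of_nonneg (by linarith)]
    nlinarith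

lemma aux_dot {d : ℕ} (A Sg B : Matrix (Fin d) (Fin d) ℝ) (a b : Fin d) :
    (A a) ⬝ᵥ (Sg *ᵥ (B b)) = (A * Sg * Bᵀ) a b := by
  simp only [Matrix.mul_apply, Matrix.mulVec, dotProduct, Matrix.transpose_apply,
    Finset.mul_sum, Finset.sum_mul]
  rw [Finset.sum_comm]
  exact Finset.sum_congr rfl fun i _ => Finset.sum_congr rfl fun k _ => by ring

lemma aux_integrable_sq_gaussian (t : NNReal) :
    Integrable (fun x : ℝ => x ^ 2) (gaussianReal 0 t) := by
  rcases eq_or_ne t 0 with h | h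
  · rw [h, gaussianReal_zero_var]
    refine ⟨(measurable_id.pow_const 2).aestronglyMeasurable, ?_⟩
    rw [HasFiniteIntegral, lintegral_dirac]
    exact ENNReal.coe_lt_top
  · rw [gaussianReal_of_var_ne_zero 0 h]
    rw [integrable_withDensity_iff (measurable_gaussianPDF 0 t)
      (ae_of_all _ fun x => ENNReal.ofReal_lt_top)]
    have ht : (0:ℝ) < (t:ℝ) := NNReal.coe_pos.mpr (pos_iff_ne_zero.mpr h)
    have hb : (0:ℝ) < (2*(t:ℝ))⁻¹ := by positivity
    have hint : Integrable (fun x : ℝ => x ^ 2 * Real.exp (-(2*(t:ℝ))⁻¹ * x ^ 2)) := by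
      have := integrable_rpow_mul_exp_neg_mul_sq hb (s := 2) (by norm_num)
      simpa [Real.rpow_two] using this
    refine (hint.const_mul ((Real.sqrt (2*Real.pi*t))⁻¹)).congr (ae_of_all _ fun x => ?_)
    show _ = x ^ 2 * (gaussianPDF 0 t x).toReal
    rw [show gaussianPDF 0 t x = ENNReal.ofReal (gaussianPDFReal 0 t x) from rfl,
      ENNReal.toReal_ofReal (gaussianPDFReal_nonneg _ _ _), gaussianPDFReal]
    have harg : -(x - 0) ^ 2 / (2 * (t:ℝ)) = -(2*(t:ℝ))⁻¹ * x ^ 2 := by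
      field_simp
      ring
    rw [harg]
    ring

/-- Coupling lemma for Gaussian vectors: if `v` is a `d`-dimensional centered Gaussian
vector with positive definite covariance matrix `Σ` satisfying `‖Σ - j·I‖ ≤ ε` in operator
norm (expressed via the quadratic form), then `N := √j·Σ^{-1/2}·v` is a centered Gaussian
vector with covariance `j·I`, the covariance matrix of `v - N` is `(Σ^{1/2} - √j·I)²`, it
has operator norm at most `ε`, and in particular every component of `v - N` has variance
at most `ε`. -/
theorem gaussian_coupling {d : ℕ} {Ω : Type*} [MeasurableSpace Ω] (P : Measure Ω)
    [IsProbabilityMeasure P] (v : Ω → Fin d → ℝ)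
    (Sig : Matrix (Fin d) (Fin d) ℝ) (hpd : Sig.PosDef)
    (j ε : ℝ) (hj : 0 < j) (hε : 0 ≤ ε)
    (hmeas : ∀ a, Measurable fun ω => v ω a)
    (hmean : ∀ a, ∫ ω, v ω a ∂P = 0)
    (hGauss : ∀ l : Fin d → ℝ,
      P.map (fun ω => ∑ i, l i * v ω i) = gaussianReal 0 (Real.toNNReal (l ⬝ᵥ (Sig *ᵥ l))))
    (hcov : ∀ a b, ∫ ω, v ω a * v ω b ∂P = Sig a b)
    (hnorm : ∀ x : Fin d → ℝ,
      |x ⬝ᵥ ((Sig - j • (1 : Matrix (Fin d) (Fin d) ℝ)) *ᵥ x)| ≤ ε * (x ⬝ᵥ x)) :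
    let N : Ω → Fin d → ℝ :=
      fun ω => Real.sqrt j • ((hpd.posSemidef.sqrt)⁻¹ *ᵥ v ω)
    (∀ l : Fin d → ℝ,
        P.map (fun ω => ∑ i, l i * N ω i)
          = gaussianReal 0 (Real.toNNReal (j * (l ⬝ᵥ l))))
    ∧ (∀ a b, ∫ ω, N ω a * N ω b ∂P = (j • (1 : Matrix (Fin d) (Fin d) ℝ)) a b)
    ∧ (∀ a b, ∫ ω, (v ω a - N ω a) * (v ω b - N ω b) ∂P
        = ((hpd.posSemidef.sqrt - Real.sqrt j • (1 : Matrix (Fin d) (Fin d) ℝ)) ^ 2) a b)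
    ∧ (∀ x : Fin d → ℝ,
        |x ⬝ᵥ (((hpd.posSemidef.sqrt - Real.sqrt j • (1 : Matrix (Fin d) (Fin d) ℝ)) ^ 2) *ᵥ x)|
          ≤ ε * (x ⬝ᵥ x))
    ∧ (∀ a, ∫ ω, (v ω a - N ω a) ^ 2 ∂P ≤ ε) := by
  intro N
  set S : Matrix (Fin d) (Fin d) ℝ := hpd.posSemidef.sqrt with hSdef
  set M : Matrix (Fin d) (Fin d) ℝ := S - Real.sqrt j • 1 with hMdef
  have hS_psd : S.PosSemidef := by
    have h := (posSemidef_diagonal_iff.mpr (fun i => Real.sqrt_nonneg _) :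
      (diagonal ((↑) ∘ (√·) ∘ hpd.posSemidef.1.eigenvalues) : Matrix (Fin d) (Fin d) ℝ).PosSemidef).mul_mul_conjTranspose_same
      (hpd.posSemidef.1.eigenvectorUnitary : Matrix (Fin d) (Fin d) ℝ)
    rw [← star_eq_conjTranspose] at h
    exact h
  have hS_herm : S.IsHermitian := hS_psd.1
  have hSS : S * S = Sig := by
    have hsp := hpd.posSemidef.1.spectral_theorem
    rw [Unitary.conjStarAlgAut_apply] at hsp
    rw [hSdef, Matrix.PosSemidef.sqrt]
    conv_rhs => rw [hsp]
    simp only [mul_assoc, ← mul_assoc (star _) _ _, Unitary.coe_star_mul_self, one_mul]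
    rw [← mul_assoc (diagonal _), diagonal_mul_diagonal]
    congr 3
    funext i
    simp [Real.mul_self_sqrt (hpd.posSemidef.eigenvalues_nonneg i)]
  -- S is invertible
  have hdet : IsUnit S.det := by
    have h1 : S.det * S.det = Sig.det := by rw [← det_mul, hSS]
    have h2 : Sig.det ≠ 0 := ne_of_gt hpd.det_pos
    exact isUnit_iff_ne_zero.mpr (fun h => h2 (by rw [← h1, h, mul_zero]))
  have hSinv_mul : S⁻¹ * S = 1 := nonsing_inv_mul S hdet
  have hmul_Sinv : S * S⁻¹ = 1 := mul_nonsing_inv S hdet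
  have hSinv_herm : (S⁻¹).IsHermitian := hS_herm.inv
  have hS_symm : Sᵀ = S := hS_herm
  have hSinv_symm : (S⁻¹)ᵀ = S⁻¹ := hSinv_herm
  have hjj : Real.sqrt j * Real.sqrt j = j := Real.mul_self_sqrt hj.le
  -- N pointwise
  have hN : ∀ ω a, N ω a = (Real.sqrt j • (S⁻¹ a)) ⬝ᵥ v ω := by
    intro ω a
    show Real.sqrt j * ((S⁻¹ *ᵥ v ω) a) = _
    rw [smul_dotProduct]
    rfl
  -- v pointwise as dot product
  have hv : ∀ ω a, v ω a = ((1 : Matrix (Fin d) (Fin d) ℝ) a) ⬝ᵥ v ω := by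
    intro ω a
    simp [dotProduct, Matrix.one_apply]
  -- L² membership
  have hL2 : ∀ a, MemLp (fun ω => v ω a) 2 P := by
    intro a
    have hmap : P.map (fun ω => v ω a)
        = gaussianReal 0 (Real.toNNReal (((Pi.single a 1 : Fin d → ℝ)) ⬝ᵥ (Sig *ᵥ (Pi.single a 1 : Fin d → ℝ)))) := by
      have := hGauss ((Pi.single a 1 : Fin d → ℝ))
      have heq : (fun ω => ∑ i, (Pi.single a 1 : Fin d → ℝ) i * v ω i) = fun ω => v ω a := by
        funext ω
        simp [Pi.single_apply]
      rwa [heq] at this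
    have h1 : MemLp (id : ℝ → ℝ) 2 (P.map (fun ω => v ω a)) := by
      rw [hmap]
      exact (memLp_two_iff_integrable_sq measurable_id.aestronglyMeasurable).mpr
        (by simpa using aux_integrable_sq_gaussian _)
    exact (memLp_map_measure_iff measurable_id.aestronglyMeasurable
      (hmeas a).aemeasurable).mp h1
  have hIntMul : ∀ a b, Integrable (fun ω => v ω a * v ω b) P := by
    intro a b
    have h1 := ((hL2 a).add (hL2 b)).integrable_sq
    have h2 := (hL2 a).integrable_sq
    have h3 := (hL2 b).integrable_sq
    have heq : (fun ω => v ω a * v ω b)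
        = fun ω => (((v ω a + v ω b) ^ 2 - v ω a ^ 2) - v ω b ^ 2) / 2 := by
      funext ω; ring
    rw [heq]
    exact ((h1.sub h2).sub h3).div_const 2
  -- covariance of linear functionals
  have hcov' : ∀ c e : Fin d → ℝ,
      ∫ ω, (c ⬝ᵥ v ω) * (e ⬝ᵥ v ω) ∂P = c ⬝ᵥ (Sig *ᵥ e) := by
    intro c e
    have heq : ∀ ω, (c ⬝ᵥ v ω) * (e ⬝ᵥ v ω)
        = ∑ i, ∑ k, (c i * e k) * (v ω i * v ω k) := by
      intro ω
      rw [dotProduct, dotProduct, Finset.sum_mul_sum]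
      exact Finset.sum_congr rfl fun i _ => Finset.sum_congr rfl fun k _ => by ring
    simp_rw [heq]
    rw [integral_finset_sum _ fun i _ => integrable_finset_sum _
      fun k _ => (hIntMul i k).const_mul _]
    have : ∀ i ∈ Finset.univ, ∫ ω, ∑ k, (c i * e k) * (v ω i * v ω k) ∂P
        = ∑ k, (c i * e k) * Sig i k := by
      intro i _
      rw [integral_finset_sum _ fun k _ => (hIntMul i k).const_mul _]
      exact Finset.sum_congr rfl fun k _ => by
        rw [integral_const_mul, hcov]
    rw [Finset.sum_congr rfl this]
    simp only [mulVec, dotProduct, Finset.mul_sum]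
    exact Finset.sum_congr rfl fun i _ => Finset.sum_congr rfl fun k _ => by ring
  -- mulVec by symmetric inverse
  have hvm : ∀ x : Fin d → ℝ, S⁻¹ *ᵥ x = x ᵥ* S⁻¹ := by
    intro x
    conv_lhs => rw [← hSinv_symm]
    exact Matrix.mulVec_transpose _ _
  have hkey : S⁻¹ * (Sig * S⁻¹) = 1 := by
    rw [← hSS, show S * S * S⁻¹ = S from by rw [mul_assoc, hmul_Sinv, mul_one], hSinv_mul]
  -- Part 1
  have part1 : ∀ l : Fin d → ℝ, P.map (fun ω => ∑ i, l i * N ω i)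
      = gaussianReal 0 (Real.toNNReal (j * (l ⬝ᵥ l))) := by
    intro l
    have heq : (fun ω => ∑ i, l i * N ω i)
        = fun ω => ∑ i, (Real.sqrt j • (S⁻¹ *ᵥ l)) i * v ω i := by
      funext ω
      have h1 : ∑ i, l i * N ω i = l ⬝ᵥ (Real.sqrt j • (S⁻¹ *ᵥ v ω)) := rfl
      have h2 : ∑ i, (Real.sqrt j • (S⁻¹ *ᵥ l)) i * v ω i
          = (Real.sqrt j • (S⁻¹ *ᵥ l)) ⬝ᵥ v ω := rfl
      rw [h1, h2, dotProduct_smul, smul_dotProduct, smul_eq_mul, smul_eq_mul,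
        dotProduct_mulVec, hvm]
    rw [heq, hGauss]
    congr 1
    have hvar : (Real.sqrt j • (S⁻¹ *ᵥ l)) ⬝ᵥ (Sig *ᵥ (Real.sqrt j • (S⁻¹ *ᵥ l)))
        = j * (l ⬝ᵥ l) := by
      rw [mulVec_smul, smul_dotProduct, dotProduct_smul, smul_eq_mul, smul_eq_mul,
        ← mul_assoc, hjj]
      congr 1
      rw [mulVec_mulVec, hvm, ← dotProduct_mulVec, mulVec_mulVec, hkey, one_mulVec]
    rw [hvar]
  -- Part 2
  have part2 : ∀ a b, ∫ ω, N ω a * N ω b ∂P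
      = (j • (1 : Matrix (Fin d) (Fin d) ℝ)) a b := by
    intro a b
    simp_rw [hN]
    rw [hcov', mulVec_smul, smul_dotProduct, dotProduct_smul, smul_eq_mul, smul_eq_mul,
      ← mul_assoc, hjj, aux_dot S⁻¹ Sig S⁻¹ a b]
    have hone : S⁻¹ * Sig * (S⁻¹)ᵀ = 1 := by
      rw [hSinv_symm, ← hSS, ← mul_assoc, hSinv_mul, one_mul, hmul_Sinv]
    rw [hone]
    simp [Matrix.smul_apply]
  -- Part 3
  have hvN : ∀ ω a, v ω a - N ω a
      = (((1 : Matrix (Fin d) (Fin d) ℝ) - Real.sqrt j • S⁻¹) a) ⬝ᵥ v ω := by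
    intro ω a
    rw [hv ω a, hN ω a, ← sub_dotProduct]
    have : ((1 : Matrix (Fin d) (Fin d) ℝ) a) - Real.sqrt j • (S⁻¹ a)
        = (((1 : Matrix (Fin d) (Fin d) ℝ) - Real.sqrt j • S⁻¹) a) := by
      funext i
      simp [Matrix.sub_apply, Matrix.smul_apply]
    rw [this]
  have part3 : ∀ a b, ∫ ω, (v ω a - N ω a) * (v ω b - N ω b) ∂P = (M ^ 2) a b := by
    intro a b
    simp_rw [hvN]
    rw [hcov', aux_dot]
    have htr : ((1 : Matrix (Fin d) (Fin d) ℝ) - Real.sqrt j • S⁻¹)ᵀ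
        = 1 - Real.sqrt j • S⁻¹ := by
      rw [transpose_sub, transpose_smul, transpose_one, hSinv_symm]
    have h1 : ((1 : Matrix (Fin d) (Fin d) ℝ) - Real.sqrt j • S⁻¹) * S = M := by
      rw [sub_mul, one_mul, smul_mul_assoc, hSinv_mul, hMdef]
    have h2 : S * ((1 : Matrix (Fin d) (Fin d) ℝ) - Real.sqrt j • S⁻¹) = M := by
      rw [mul_sub, mul_one, mul_smul_comm, hmul_Sinv, hMdef]
    have hmat : ((1 : Matrix (Fin d) (Fin d) ℝ) - Real.sqrt j • S⁻¹) * Sig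
        * ((1 : Matrix (Fin d) (Fin d) ℝ) - Real.sqrt j • S⁻¹)ᵀ = M ^ 2 := by
      rw [htr, ← hSS, ← mul_assoc, mul_assoc, h1, h2, ← sq]
    rw [hmat]
  -- Part 4 : spectral analysis
  have hH : Sig.IsHermitian := hpd.posSemidef.1
  set b : Fin d → (Fin d → ℝ) := fun i => ⇑(hH.eigenvectorBasis i) with hbdef
  set lam : Fin d → ℝ := hH.eigenvalues with hlamdef
  have horth : ∀ i k, b i ⬝ᵥ b k = if i = k then (1:ℝ) else 0 := by
    intro i k
    have h := hH.eigenvectorBasis.orthonormal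
    rw [orthonormal_iff_ite] at h
    have h2 := h i k
    simpa [PiLp.inner_apply, RCLike.inner_apply, dotProduct, hbdef, mul_comm] using h2
  have hU : (hH.eigenvectorUnitary : Matrix (Fin d) (Fin d) ℝ)
      * star (hH.eigenvectorUnitary : Matrix (Fin d) (Fin d) ℝ) = 1 :=
    Unitary.coe_mul_star_self hH.eigenvectorUnitary
  have hsumrepr : ∀ x : Fin d → ℝ, ∑ i, (b i ⬝ᵥ x) • b i = x := by
    intro x
    funext a
    have h := congrFun (congrArg (fun A : Matrix (Fin d) (Fin d) ℝ => A *ᵥ x) hU) a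
    simp only [← mulVec_mulVec, one_mulVec] at h
    have hstar : (star (hH.eigenvectorUnitary : Matrix (Fin d) (Fin d) ℝ)) *ᵥ x
        = fun i => b i ⬝ᵥ x := by
      funext i
      simp [mulVec, dotProduct, Matrix.star_apply, hbdef]
    rw [hstar] at h
    rw [Finset.sum_apply, ← h]
    simp only [mulVec, dotProduct]
    refine Finset.sum_congr rfl fun i _ => ?_
    simp [hbdef, mul_comm]
  have hSb : ∀ i, S *ᵥ b i = Real.sqrt (lam i) • b i := by
    intro i
    have h0 : S = (hH.eigenvectorUnitary : Matrix (Fin d) (Fin d) ℝ)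
        * Matrix.diagonal ((↑) ∘ Real.sqrt ∘ hH.eigenvalues)
        * (star (hH.eigenvectorUnitary : Matrix (Fin d) (Fin d) ℝ)) := rfl
    rw [h0, ← mulVec_mulVec, ← mulVec_mulVec]
    rw [show (star (hH.eigenvectorUnitary : Matrix (Fin d) (Fin d) ℝ)) *ᵥ b i
      = Pi.single i 1 from hH.star_eigenvectorUnitary_mulVec i]
    rw [Matrix.diagonal_mulVec_single]
    rw [show (Pi.single i (((↑) ∘ Real.sqrt ∘ hH.eigenvalues) i * 1) : Fin d → ℝ)
      = Real.sqrt (lam i) • (Pi.single i 1 : Fin d → ℝ) from by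
        funext k
        simp [Pi.single_apply, hlamdef]]
    rw [mulVec_smul]
    rw [show (hH.eigenvectorUnitary : Matrix (Fin d) (Fin d) ℝ) *ᵥ Pi.single i 1
      = b i from hH.eigenvectorUnitary_mulVec i]
  have hMb : ∀ i, M *ᵥ b i = (Real.sqrt (lam i) - Real.sqrt j) • b i := by
    intro i
    rw [hMdef, sub_mulVec, hSb, smul_mulVec, one_mulVec, sub_smul]
  have hM2b : ∀ i, (M ^ 2) *ᵥ b i = (Real.sqrt (lam i) - Real.sqrt j) ^ 2 • b i := by
    intro i
    rw [sq, ← mulVec_mulVec, hMb, mulVec_smul, hMb, smul_smul, ← sq]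
  have heig : ∀ i, (Real.sqrt (lam i) - Real.sqrt j) ^ 2 ≤ ε := by
    intro i
    have h1 := hnorm (b i)
    have hSigb : Sig *ᵥ b i = lam i • b i := hH.mulVec_eigenvectorBasis i
    have h2 : (Sig - j • (1 : Matrix (Fin d) (Fin d) ℝ)) *ᵥ b i = (lam i - j) • b i := by
      rw [sub_mulVec, hSigb, smul_mulVec, one_mulVec, sub_smul]
    have h3 : b i ⬝ᵥ b i = 1 := by rw [horth]; simp
    rw [h2, dotProduct_smul, smul_eq_mul, h3, mul_one, mul_one] at h1
    calc (Real.sqrt (lam i) - Real.sqrt j) ^ 2 ≤ |lam i - j| :=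
          aux_sqrt_sub_sq_le (hpd.posSemidef.eigenvalues_nonneg i) hj
      _ ≤ ε := h1
  have hdotsum : ∀ p q : Fin d → ℝ,
      (∑ i, p i • b i) ⬝ᵥ (∑ k, q k • b k) = ∑ i, p i * q i := by
    intro p q
    have e1 : (∑ i, p i • b i) ⬝ᵥ (∑ k, q k • b k)
        = ∑ a, (∑ i, p i * b i a) * (∑ k, q k * b k a) := by
      simp [dotProduct, Finset.sum_apply, Pi.smul_apply]
    have e2 : ∀ a : Fin d, (∑ i, p i * b i a) * (∑ k, q k * b k a)
        = ∑ i, ∑ k, (p i * q k) * (b i a * b k a) := by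
      intro a
      rw [Finset.sum_mul_sum]
      exact Finset.sum_congr rfl fun i _ => Finset.sum_congr rfl fun k _ => by ring
    rw [e1]
    simp_rw [e2]
    rw [Finset.sum_comm]
    refine Finset.sum_congr rfl fun i _ => ?_
    rw [Finset.sum_comm]
    have e3 : ∀ k, ∑ a, (p i * q k) * (b i a * b k a) = (p i * q k) * (b i ⬝ᵥ b k) := by
      intro k
      rw [dotProduct, Finset.mul_sum]
    simp_rw [e3, horth]
    simp
  have part4 : ∀ x : Fin d → ℝ, |x ⬝ᵥ ((M ^ 2) *ᵥ x)| ≤ ε * (x ⬝ᵥ x) := by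
    intro x
    have hx := hsumrepr x
    set c : Fin d → ℝ := fun i => b i ⬝ᵥ x with hcdef
    have hMxsum : ∀ (f : Fin d → Fin d → ℝ),
        (M ^ 2) *ᵥ (∑ i, f i) = ∑ i, (M ^ 2) *ᵥ f i := by
      intro f
      funext a
      simp only [mulVec, dotProduct, Finset.sum_apply, Finset.mul_sum]
      rw [Finset.sum_comm]
    have hMx : (M ^ 2) *ᵥ x = ∑ i, (c i * (Real.sqrt (lam i) - Real.sqrt j) ^ 2) • b i := by
      conv_lhs => rw [← hx]
      rw [hMxsum]
      exact Finset.sum_congr rfl fun i _ => by rw [mulVec_smul, hM2b, smul_smul]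
    have hquad : x ⬝ᵥ ((M ^ 2) *ᵥ x)
        = ∑ i, c i * (c i * (Real.sqrt (lam i) - Real.sqrt j) ^ 2) := by
      rw [hMx]
      conv_lhs => rw [← hx]
      exact hdotsum _ _
    have hxx : x ⬝ᵥ x = ∑ i, c i * c i := by
      conv_lhs => rw [← hx]
      exact hdotsum _ _
    rw [hquad, hxx]
    have hnn : ∀ i, 0 ≤ c i * (c i * (Real.sqrt (lam i) - Real.sqrt j) ^ 2) := by
      intro i
      rw [← mul_assoc]
      exact mul_nonneg (mul_self_nonneg _) (sq_nonneg _)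
    rw [abs_of_nonneg (Finset.sum_nonneg fun i _ => hnn i), Finset.mul_sum]
    refine Finset.sum_le_sum fun i _ => ?_
    rw [← mul_assoc]
    calc c i * c i * (Real.sqrt (lam i) - Real.sqrt j) ^ 2
        ≤ c i * c i * ε := mul_le_mul_of_nonneg_left (heig i) (mul_self_nonneg _)
      _ = ε * (c i * c i) := by ring
  -- Part 5
  have part5 : ∀ a, ∫ ω, (v ω a - N ω a) ^ 2 ∂P ≤ ε := by
    intro a
    have h1 : ∫ ω, (v ω a - N ω a) ^ 2 ∂P = (M ^ 2) a a := by
      rw [← part3 a a]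
      exact integral_congr_ae (ae_of_all _ fun ω => sq (v ω a - N ω a))
    rw [h1]
    have h2 := part4 (Pi.single a 1 : Fin d → ℝ)
    have h3 : (Pi.single a 1 : Fin d → ℝ) ⬝ᵥ ((M ^ 2) *ᵥ (Pi.single a 1 : Fin d → ℝ))
        = (M ^ 2) a a := by
      simp [dotProduct, mulVec, Pi.single_apply]
    have h4 : (Pi.single a 1 : Fin d → ℝ) ⬝ᵥ (Pi.single a 1 : Fin d → ℝ) = 1 := by
      simp [dotProduct, Pi.single_apply]
    rw [h3, h4, mul_one] at h2
    exact le_trans (le_abs_self _) h2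
  exact ⟨part1, part2, part3, part4, part5⟩
end

section
/- Fix n ≥ 1, k ≥ 1 with k < n. For strings X and Y of lengths n−k and n, the constrained optimal alignment score with exactly k gaps in X (gap penalty 0) satisfies L_n^k(S) = max over increasing sequences 0 = c₀ < c₁ < … < c_k < n of Σ_{i=1}^{k+1} (Rⁱ(cᵢ − 1) − Rⁱ(c_{i−1})) with c_{k+1} − 1 := n, where Rⁱ(m) = Σ_{l=1}^{m} S(X_{l−i+1}, Y_l). Moreover, replacing each cᵢ − 1 by cᵢ changes the value by at most C·k, where C = max_{u,v} |S(u,v)|; i.e. |L̃_n^k(S) − L_n^k(S)| ≤ C·k. -/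
open Finset

section

variable {A : Type*}

/-- Partial sums `Rⁱ(m) = Σ_{l=1}^m S(X_{l-i+1}, Y_l)` of the shifted scoring walks. -/
noncomputable def Rw (S : A → A → ℝ) (X : ℤ → A) (Y : ℕ → A) (i m : ℕ) : ℝ :=
  ∑ l ∈ Finset.Icc 1 m, S (X ((l : ℤ) - (i : ℤ) + 1)) (Y l)

/-- Score of the alignment of `X` (length `n - k`, extended to a doubly infinite sequence)
with `Y₁…Yₙ` in which exactly the letters `Y_l`, `l ∈ g`, are aligned with gaps (gap
penalty `0`): each remaining `Y_l` is aligned with `X_{l - #(gaps before l)}`. -/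
noncomputable def gapScore (S : A → A → ℝ) (X : ℤ → A) (Y : ℕ → A) (n : ℕ)
    (g : Finset ℕ) : ℝ :=
  ∑ l ∈ Finset.Icc 1 n \ g, S (X ((l : ℤ) - ((g.filter (· < l)).card : ℤ))) (Y l)

/-- The sum `Σ_{i=1}^{k+1} (Rⁱ(cᵢ - 1) - Rⁱ(c_{i-1}))` for a chain
`0 = c₀ < c₁ < … < c_k < n` (encoded with `c_{k+1} = n + 1`, so `c_{k+1} - 1 = n`). -/
noncomputable def chainSum (S : A → A → ℝ) (X : ℤ → A) (Y : ℕ → A) (k : ℕ)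
    (c : Fin (k + 2) → ℕ) : ℝ :=
  ∑ i : Fin (k + 1), (Rw S X Y ((i : ℕ) + 1) (c i.succ - 1) - Rw S X Y ((i : ℕ) + 1) (c i.castSucc))

/-- The modified sum in which each upper boundary `cᵢ - 1` is replaced by `cᵢ`
(the final boundary stays `n`). -/
noncomputable def chainSumTilde (S : A → A → ℝ) (X : ℤ → A) (Y : ℕ → A) (n k : ℕ)
    (c : Fin (k + 2) → ℕ) : ℝ :=
  ∑ i : Fin (k + 1),
    (Rw S X Y ((i : ℕ) + 1) (if i.succ = Fin.last (k + 1) then n else c i.succ)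
      - Rw S X Y ((i : ℕ) + 1) (c i.castSucc))

/-- A chain `0 = c₀ < c₁ < … < c_k < n` with the convention `c_{k+1} = n + 1`. -/
def AdmissibleChain (n k : ℕ) (c : Fin (k + 2) → ℕ) : Prop :=
  StrictMono c ∧ c 0 = 0 ∧ c (Fin.last (k + 1)) = n + 1 ∧
    ∀ i : Fin (k + 2), i ≠ Fin.last (k + 1) → c i < n

/-- Auxiliary: the middle values `c₁, …, c_k` of a chain, as a finset. -/
def midSetAux (k : ℕ) (c : Fin (k + 2) → ℕ) : Finset ℕ :=
  Finset.univ.image (fun m : Fin k => c m.succ.castSucc)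

lemma midAux_ne_last {k : ℕ} (m : Fin k) :
    (m.succ.castSucc : Fin (k + 2)) ≠ Fin.last (k + 1) := by
  simp [Fin.ext_iff]; omega

lemma midSetAux_card {n k : ℕ} {c : Fin (k + 2) → ℕ} (hc : AdmissibleChain n k c) :
    (midSetAux k c).card = k := by
  rw [midSetAux, Finset.card_image_of_injective _ (fun a b hab => by
    have := hc.1.injective hab
    simpa [Fin.ext_iff] using this)]
  simp

lemma midSetAux_subset {n k : ℕ} {c : Fin (k + 2) → ℕ} (hc : AdmissibleChain n k c) :
    midSetAux k c ⊆ Finset.Ico 1 n := by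
  intro x hx
  rw [midSetAux] at hx
  obtain ⟨m, -, rfl⟩ := Finset.mem_image.1 hx
  refine Finset.mem_Ico.2 ⟨?_, hc.2.2.2 _ (midAux_ne_last m)⟩
  have h1 : c 0 < c m.succ.castSucc := hc.1 (by simp [Fin.lt_def])
  have h0 := hc.2.1
  omega

lemma Rw_eq_Ioc (S : A → A → ℝ) (X : ℤ → A) (Y : ℕ → A) (i m : ℕ) :
    Rw S X Y i m = ∑ l ∈ Finset.Ioc 0 m, S (X ((l : ℤ) - (i : ℤ) + 1)) (Y l) := by
  rw [Rw]; congr 1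

lemma Rw_sub {a b : ℕ} (hab : a ≤ b) (S : A → A → ℝ) (X : ℤ → A) (Y : ℕ → A) (i : ℕ) :
    Rw S X Y i b - Rw S X Y i a
      = ∑ l ∈ Finset.Ioc a b, S (X ((l : ℤ) - (i : ℤ) + 1)) (Y l) := by
  rw [Rw_eq_Ioc, Rw_eq_Ioc, ← Finset.sum_Ioc_consecutive _ (Nat.zero_le a) hab]; ring

lemma Rw_single {m : ℕ} (hm : 1 ≤ m) (S : A → A → ℝ) (X : ℤ → A) (Y : ℕ → A) (i : ℕ) :
    Rw S X Y i m - Rw S X Y i (m - 1) = S (X ((m : ℤ) - (i : ℤ) + 1)) (Y m) := by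
  have h := Rw_sub (a := m - 1) (b := m) (by omega) S X Y i
  rw [h]
  have : Finset.Ioc (m - 1) m = {m} := by ext x; simp; omega
  rw [this, Finset.sum_singleton]

lemma count_eq {n k : ℕ} {c : Fin (k + 2) → ℕ} (hc : AdmissibleChain n k c)
    (i : Fin (k + 1)) (l : ℕ) (hl1 : c i.castSucc < l) (hl2 : l ≤ c i.succ - 1) :
    ((midSetAux k c).filter (· < l)).card = i := by
  have hinj : Function.Injective (fun m : Fin k => c m.succ.castSucc) := by
    intro a b hab
    have := hc.1.injective hab
    simpa [Fin.ext_iff] using this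
  rw [midSetAux, Finset.filter_image, Finset.card_image_of_injective _ hinj]
  have hlt : l < c i.succ := by
    have h0 : c 0 < c i.succ := hc.1 (by simp [Fin.lt_def])
    omega
  have hset : (Finset.univ.filter (fun m : Fin k => c m.succ.castSucc < l))
      = Finset.univ.filter (fun m : Fin k => (m : ℕ) < (i : ℕ)) := by
    ext m
    simp only [Finset.mem_filter, Finset.mem_univ, true_and]
    constructor
    · intro h
      have : (m.succ.castSucc : Fin (k+2)) < i.succ := hc.1.lt_iff_lt.1 (lt_trans h hlt)
      simpa [Fin.lt_def] using this
    · intro h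
      have hle : (m.succ.castSucc : Fin (k+2)) ≤ i.castSucc := by
        simp [Fin.le_def]; omega
      exact lt_of_le_of_lt (hc.1.monotone hle) hl1
  rw [hset]
  have : (Finset.univ.filter (fun m : Fin k => (m : ℕ) < (i : ℕ)))
      = (Finset.range (i : ℕ)).attachFin (fun m hm => by
          have := Finset.mem_range.1 hm; have := i.isLt
          omega) := by
    ext m; simp [Finset.mem_attachFin]
  rw [this, Finset.card_attachFin, Finset.card_range]

lemma partition_eq {n k : ℕ} {c : Fin (k + 2) → ℕ} (hc : AdmissibleChain n k c) :
    Finset.Icc 1 n \ midSetAux k c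
      = Finset.univ.biUnion (fun i : Fin (k + 1) => Finset.Ioc (c i.castSucc) (c i.succ - 1)) := by
  obtain ⟨hmono, h0, hlast, hmid⟩ := hc
  ext l
  simp only [Finset.mem_sdiff, Finset.mem_Icc, Finset.mem_biUnion, Finset.mem_univ, true_and,
    Finset.mem_Ioc]
  constructor
  · rintro ⟨⟨hl1, hln⟩, hlg⟩
    have hne : (Finset.univ.filter (fun j : Fin (k+2) => c j < l)).Nonempty :=
      ⟨0, by simp [h0]; omega⟩
    set j := (Finset.univ.filter (fun j : Fin (k+2) => c j < l)).max' hne with hj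
    have hjmem : c j < l := by
      have := Finset.max'_mem _ hne
      simpa using this
    have hjmax : ∀ j' : Fin (k+2), c j' < l → j' ≤ j := fun j' hj' =>
      Finset.le_max' _ _ (by simpa using hj')
    clear hj
    clear_value j
    have hjne : j ≠ Fin.last (k+1) := by
      intro h
      rw [h, hlast] at hjmem; omega
    obtain ⟨i, rfl⟩ := Fin.exists_castSucc_eq.2 hjne
    refine ⟨i, hjmem, ?_⟩
    have hle : l ≤ c i.succ := by
      by_contra h
      push_neg at h
      exact absurd (hjmax i.succ h) (by simp [Fin.le_def])
    have hne2 : l ≠ c i.succ := by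
      intro heq
      by_cases hil : i = Fin.last k
      · rw [hil] at heq
        have : (Fin.last k).succ = Fin.last (k+1) := by simp [Fin.ext_iff]
        rw [this, hlast] at heq; omega
      · obtain ⟨m, rfl⟩ := Fin.exists_castSucc_eq.2 hil
        apply hlg
        rw [midSetAux, Finset.mem_image]
        exact ⟨m, Finset.mem_univ m, by rw [← Fin.succ_castSucc]; exact heq.symm⟩
    omega
  · rintro ⟨i, hi1, hi2⟩
    have hpos : c i.castSucc < c i.succ := hmono (Fin.castSucc_lt_succ (i := i))
    have hub : c i.succ ≤ n + 1 := by
      rw [← hlast]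
      exact hmono.monotone (Fin.le_last _)
    refine ⟨⟨by omega, by omega⟩, ?_⟩
    intro hmem
    rw [midSetAux, Finset.mem_image] at hmem
    obtain ⟨m, -, hm⟩ := hmem
    have h1 : (i.castSucc : Fin (k+2)) < m.succ.castSucc := hmono.lt_iff_lt.1 (by omega)
    have h2 : (m.succ.castSucc : Fin (k+2)) < i.succ := hmono.lt_iff_lt.1 (by omega)
    rw [Fin.lt_def] at h1 h2
    simp at h1 h2
    omega

lemma gapScore_midSetAux {n k : ℕ} {c : Fin (k + 2) → ℕ} (hc : AdmissibleChain n k c)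
    (S : A → A → ℝ) (X : ℤ → A) (Y : ℕ → A) :
    gapScore S X Y n (midSetAux k c) = chainSum S X Y k c := by
  have hdisj : ∀ i ∈ (Finset.univ : Finset (Fin (k+1))), ∀ j ∈ Finset.univ, i ≠ j →
      Disjoint (Finset.Ioc (c i.castSucc) (c i.succ - 1))
        (Finset.Ioc (c j.castSucc) (c j.succ - 1)) := by
    have key : ∀ i j : Fin (k+1), i < j →
        Disjoint (Finset.Ioc (c i.castSucc) (c i.succ - 1))
          (Finset.Ioc (c j.castSucc) (c j.succ - 1)) := by
      intro i j hij
      have hle : (i.succ : Fin (k+2)) ≤ j.castSucc := by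
        simp [Fin.le_def]; omega
      have h2 : c i.succ ≤ c j.castSucc := hc.1.monotone hle
      rw [Finset.disjoint_left]
      intro a ha hb
      rw [Finset.mem_Ioc] at ha hb
      omega
    intro i _ j _ hij
    rcases lt_or_gt_of_ne hij with h | h
    · exact key i j h
    · exact (key j i h).symm
  rw [gapScore, partition_eq hc,
    Finset.sum_biUnion (by exact fun i hi j hj hij => hdisj i hi j hj hij)]
  rw [chainSum]
  refine Finset.sum_congr rfl fun i _ => ?_
  have hab : c i.castSucc ≤ c i.succ - 1 := by
    have := hc.1 (Fin.castSucc_lt_succ (i := i))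
    omega
  rw [Rw_sub hab]
  refine Finset.sum_congr rfl fun l hl => ?_
  rw [Finset.mem_Ioc] at hl
  rw [count_eq hc i l hl.1 hl.2]
  congr 2
  push_cast
  ring

lemma exists_chain {n k : ℕ} (hn : 1 ≤ n) {g : Finset ℕ} (hg : g.card = k)
    (hsub : g ⊆ Finset.Ico 1 n) :
    ∃ c : Fin (k + 2) → ℕ, AdmissibleChain n k c ∧ midSetAux k c = g := by
  have h0g : 0 ∉ g := fun h => by simpa using (hsub h)
  have hn1g : n + 1 ∉ g := fun h => by
    have := Finset.mem_Ico.1 (hsub h); omega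
  set s : Finset ℕ := insert 0 (insert (n+1) g) with hs
  have hcard : s.card = k + 2 := by
    rw [hs, Finset.card_insert_of_notMem (by
        simp only [Finset.mem_insert]; push_neg; exact ⟨by omega, h0g⟩),
      Finset.card_insert_of_notMem hn1g, hg]
  set c : Fin (k+2) → ℕ := fun i => s.orderEmbOfFin hcard i with hcdef
  have hmem : ∀ i, c i ∈ s := fun i => Finset.orderEmbOfFin_mem s hcard i
  have hmono : StrictMono c := (s.orderEmbOfFin hcard).strictMono
  have hc0 : c 0 = 0 := by
    have hz := Finset.orderEmbOfFin_zero hcard (by omega)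
    have heq : c 0 = s.min' _ := hz
    rw [heq]
    exact Nat.le_antisymm (Finset.min'_le _ 0 (by simp [hs])) (Nat.zero_le _)
  have hclast : c (Fin.last (k+1)) = n + 1 := by
    have hz := Finset.orderEmbOfFin_last hcard (by omega)
    have heq : c (Fin.last (k+1)) = s.max' _ := hz
    rw [heq]
    refine Nat.le_antisymm (Finset.max'_le _ _ _ ?_) (Finset.le_max' _ _ (by simp [hs]))
    intro y hy
    rw [hs] at hy
    simp at hy
    rcases hy with rfl | rfl | hy
    · omega
    · omega
    · have := Finset.mem_Ico.1 (hsub hy); omega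
  have hlt : ∀ i : Fin (k+2), i ≠ Fin.last (k+1) → c i < n := by
    intro i hi
    have hne : c i ≠ n + 1 := by
      intro h
      exact hi (hmono.injective (h.trans hclast.symm))
    have := hmem i
    rw [hs] at this
    simp at this
    rcases this with h | h | h
    · omega
    · omega
    · have := Finset.mem_Ico.1 (hsub h); omega
  have hadm : AdmissibleChain n k c := ⟨hmono, hc0, hclast, hlt⟩
  refine ⟨c, hadm, ?_⟩
  have hsubg : midSetAux k c ⊆ g := by
    intro x hx
    rw [midSetAux] at hx
    obtain ⟨m, -, rfl⟩ := Finset.mem_image.1 hx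
    have hmm := hmem m.succ.castSucc
    rw [hs] at hmm
    simp at hmm
    rcases hmm with h | h | h
    · exfalso
      have : c 0 < c m.succ.castSucc := hmono (by simp [Fin.lt_def])
      have h' : c m.succ.castSucc = 0 := h
      omega
    · exfalso
      have hne : (m.succ.castSucc : Fin (k+2)) ≠ Fin.last (k+1) := by
        simp [Fin.ext_iff]; omega
      have := hlt _ hne
      have h' : c m.succ.castSucc = n + 1 := h
      omega
    · exact h
  have hcardm : (midSetAux k c).card = k := midSetAux_card hadm
  exact Finset.eq_of_subset_of_card_le hsubg (by omega)

lemma tilde_bound {n k : ℕ} (S : A → A → ℝ) (X : ℤ → A) (Y : ℕ → A) (C : ℝ)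
    (hC : ∀ u v : A, |S u v| ≤ C) {c : Fin (k + 2) → ℕ} (hc : AdmissibleChain n k c) :
    |chainSumTilde S X Y n k c - chainSum S X Y k c| ≤ C * k := by
  have hC0 : 0 ≤ C := le_trans (abs_nonneg _) (hC (X 0) (X 0))
  rw [chainSumTilde, chainSum, ← Finset.sum_sub_distrib]
  have key : ∀ i : Fin (k + 1),
      |(Rw S X Y ((i : ℕ) + 1) (if i.succ = Fin.last (k + 1) then n else c i.succ)
          - Rw S X Y ((i : ℕ) + 1) (c i.castSucc))
        - (Rw S X Y ((i : ℕ) + 1) (c i.succ - 1) - Rw S X Y ((i : ℕ) + 1) (c i.castSucc))|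
      ≤ (if i = Fin.last k then 0 else C) := by
    intro i
    by_cases hi : i.succ = Fin.last (k + 1)
    · have hi' : i = Fin.last k := by
        rw [Fin.ext_iff] at hi ⊢; simpa using hi
      rw [if_pos hi, if_pos hi', hi, hc.2.2.1]
      simp
    · have hi' : i ≠ Fin.last k := by
        intro h; apply hi; rw [Fin.ext_iff] at h ⊢; simpa using h
      rw [if_neg hi, if_neg hi']
      have h1 : 1 ≤ c i.succ := by
        have := hc.1 (show (0 : Fin (k+2)) < i.succ by simp [Fin.lt_def])
        rw [hc.2.1] at this; omega
      have heq : (Rw S X Y ((i : ℕ) + 1) (c i.succ)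
          - Rw S X Y ((i : ℕ) + 1) (c i.castSucc))
        - (Rw S X Y ((i : ℕ) + 1) (c i.succ - 1) - Rw S X Y ((i : ℕ) + 1) (c i.castSucc))
        = Rw S X Y ((i : ℕ) + 1) (c i.succ) - Rw S X Y ((i : ℕ) + 1) (c i.succ - 1) := by ring
      rw [heq, Rw_single h1]
      exact hC _ _
  calc |∑ i : Fin (k+1), _| ≤ ∑ i : Fin (k+1), (if i = Fin.last k then (0:ℝ) else C) :=
        Finset.abs_sum_le_sum_abs _ _ |>.trans (Finset.sum_le_sum fun i _ => key i)
    _ = C * k := by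
        have : ∀ i : Fin (k+1), (if i = Fin.last k then (0:ℝ) else C)
            = C - (if i = Fin.last k then C else 0) := by intro i; split <;> ring
        simp only [this]
        rw [Finset.sum_sub_distrib, Finset.sum_const,
          Finset.sum_ite_eq' Finset.univ (Fin.last k) (fun _ => C)]
        simp [Finset.card_univ, mul_comm]
        ring

lemma sSup_image_abs_le {α : Type*} {P : Set α} (hne : P.Nonempty) (hfin : P.Finite)
    (f g : α → ℝ) {B : ℝ} (h : ∀ p ∈ P, |f p - g p| ≤ B) :
    |sSup (f '' P) - sSup (g '' P)| ≤ B := by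
  have hbf : BddAbove (f '' P) := (hfin.image f).bddAbove
  have hbg : BddAbove (g '' P) := (hfin.image g).bddAbove
  rw [abs_sub_le_iff]
  constructor
  · rw [sub_le_iff_le_add]
    refine csSup_le (hne.image f) ?_
    rintro x ⟨p, hp, rfl⟩
    have := (abs_sub_le_iff.1 (h p hp)).1
    have h2 : g p ≤ sSup (g '' P) := le_csSup hbg ⟨p, hp, rfl⟩
    linarith
  · rw [sub_le_iff_le_add]
    refine csSup_le (hne.image g) ?_
    rintro x ⟨p, hp, rfl⟩
    have := (abs_sub_le_iff.1 (h p hp)).2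
    have h2 : f p ≤ sSup (f '' P) := le_csSup hbf ⟨p, hp, rfl⟩
    linarith


/-- The constrained optimal alignment score with exactly `k` gaps, all inserted into `X`,
equals the maximum over chains `0 = c₀ < c₁ < … < c_k < n` of
`Σ_{i=1}^{k+1} (Rⁱ(cᵢ - 1) - Rⁱ(c_{i-1}))` (with `c_{k+1} - 1 = n`); moreover replacing
each `cᵢ - 1` by `cᵢ` changes each value, and hence the optimum, by at most `C·k`, where
`C` bounds `|S|`. -/
theorem constrained_score_eq_chain_max (S : A → A → ℝ) (X : ℤ → A) (Y : ℕ → A)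
    (n k : ℕ) (hk1 : 1 ≤ k) (hkn : k < n) (C : ℝ) (hC : ∀ u v : A, |S u v| ≤ C) :
    (sSup {s : ℝ | ∃ g : Finset ℕ, g.card = k ∧ g ⊆ Finset.Ico 1 n ∧
          s = gapScore S X Y n g}
        = sSup {s : ℝ | ∃ c : Fin (k + 2) → ℕ, AdmissibleChain n k c ∧ s = chainSum S X Y k c})
    ∧ (∀ c : Fin (k + 2) → ℕ, AdmissibleChain n k c →
        |chainSumTilde S X Y n k c - chainSum S X Y k c| ≤ C * k)
    ∧ |sSup {s : ℝ | ∃ c : Fin (k + 2) → ℕ, AdmissibleChain n k c ∧ s = chainSumTilde S X Y n k c}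
        - sSup {s : ℝ | ∃ c : Fin (k + 2) → ℕ, AdmissibleChain n k c ∧ s = chainSum S X Y k c}|
      ≤ C * k := by
  have hn : 1 ≤ n := by omega
  set P : Set (Fin (k + 2) → ℕ) := {c | AdmissibleChain n k c} with hP
  have hPfin : P.Finite := by
    apply Set.Finite.subset (Set.finite_Icc (fun _ : Fin (k+2) => 0) (fun _ => n + 1))
    rintro c hc
    refine ⟨fun i => Nat.zero_le _, fun i => ?_⟩
    rw [← hc.2.2.1]; exact hc.1.monotone (Fin.le_last i)
  have hPne : P.Nonempty := by
    obtain ⟨c, hadm, -⟩ := exists_chain hn (g := Finset.Ico 1 (k+1))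
      (by rw [Nat.card_Ico]) (Finset.Ico_subset_Ico le_rfl (by omega))
    exact ⟨c, hadm⟩
  have himg : ∀ f : (Fin (k + 2) → ℕ) → ℝ,
      {s : ℝ | ∃ c : Fin (k + 2) → ℕ, AdmissibleChain n k c ∧ s = f c} = f '' P := by
    intro f
    ext s
    constructor
    · rintro ⟨c, hadm, rfl⟩; exact ⟨c, hadm, rfl⟩
    · rintro ⟨c, hadm, rfl⟩; exact ⟨c, hadm, rfl⟩
  refine ⟨?_, fun c hc => tilde_bound S X Y C hC hc, ?_⟩
  · congr 1
    ext s
    constructor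
    · rintro ⟨g, hcard, hsub, rfl⟩
      obtain ⟨c, hadm, hmid⟩ := exists_chain hn hcard hsub
      exact ⟨c, hadm, by rw [← hmid, gapScore_midSetAux hadm]⟩
    · rintro ⟨c, hadm, rfl⟩
      exact ⟨midSetAux k c, midSetAux_card hadm, midSetAux_subset hadm,
        (gapScore_midSetAux hadm S X Y).symm⟩
  · rw [himg (chainSumTilde S X Y n k), himg (chainSum S X Y k)]
    exact sSup_image_abs_le hPne hPfin _ _ (fun c hc => tilde_bound S X Y C hC hc)


end
end
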